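/- For every integer ℓ ≥ 1, let k = ⌈ℓ · log₂(3/2)⌉, let n_ℓ denote the number of vertices of T(u,v,k,ℓ), and let c_ℓ denote its number of proper 3-colorings. Then T(u,v,k,ℓ) is triangle-free and c_ℓ ≤ 64^(n_ℓ^(log 3 / log (9/2))), where the exponent log 3 / log (9/2) is the base-(9/2) logarithm of 3. In particular, for infinitely many integers n there exists an n-vertex triangle-free graph (namely one of the graphs T(u,v,k,ℓ)) with at most 64^(n^(log 3 / log (9/2))) proper 3-colorings. -/

import Mathlib

/-- The base relation for the graph `P(u,v,b)`: vertices are `Sum.inl 0 = u`,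
`Sum.inl 1 = v`, and `Sum.inr i = v_{i+1}` (0-indexed path vertices).
Edges: consecutive path vertices, `u` to odd-numbered path vertices `v₁, v₃, …`
(even 0-based index), and `v` to even-numbered ones `v₂, v₄, …`. -/
def PAdj (b : ℕ) : (Fin 2 ⊕ Fin b) → (Fin 2 ⊕ Fin b) → Prop
  | Sum.inr i, Sum.inr j => (j : ℕ) = (i : ℕ) + 1
  | Sum.inl x, Sum.inr i => (x : ℕ) = (i : ℕ) % 2
  | _, _ => False

/-- The graph `P(u,v,b)`. -/
def Pgraph (b : ℕ) : SimpleGraph (Fin 2 ⊕ Fin b) := SimpleGraph.fromRel (PAdj b)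

/-- The set of proper 3-colorings of a graph `G`. -/
def properColorings {V : Type*} (G : SimpleGraph V) : Set (V → Fin 3) :=
  {ψ | ∀ a b, G.Adj a b → ψ a ≠ ψ b}

/-- The type of "inner" vertices of `T(u,v,k,ℓ)` (all vertices except the two
special vertices `u, v`). At level `0` these are the `2^k` path vertices of
`P(u,v,2^k)`; at level `ℓ+1` they are the five path vertices `v₁,…,v₅` of the
base copy of `P(u,v,5)` together with the inner vertices of the three glued
copies of `T(·,·,k,ℓ)`. -/
def TInner (k : ℕ) : ℕ → Type
  | 0 => Fin (2 ^ k)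
  | ℓ + 1 => Fin 5 ⊕ (Fin 3 × TInner k ℓ)

/-- The vertex type of `T(u,v,k,ℓ)`: the special vertices `u = Sum.inl 0`,
`v = Sum.inl 1` together with the inner vertices. -/
abbrev TVert (k ℓ : ℕ) : Type := Fin 2 ⊕ TInner k ℓ

/-- The pair of path vertices of `P(u,v,5)` onto which the `c`-th copy of
`T(·,·,k,ℓ-1)` is glued: `(v₁,v₃)` for `c = 0`, `(v₂,v₄)` for `c = 1`,
`(v₃,v₅)` for `c = 2` (0-indexed). -/
def gluePair (c : Fin 3) : Fin 5 × Fin 5 :=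
  (⟨c.val, by omega⟩, ⟨c.val + 2, by have := c.isLt; omega⟩)

/-- The embedding of the `c`-th copy of `T(·,·,k,ℓ)` into `T(u,v,k,ℓ+1)`:
its special vertices are identified with the glue pair, and its inner vertices
are tagged with `c`. -/
def embedT (k ℓ : ℕ) (c : Fin 3) : TVert k ℓ → TVert k (ℓ + 1)
  | Sum.inl x => if x = 0 then Sum.inr (Sum.inl (gluePair c).1)
                 else Sum.inr (Sum.inl (gluePair c).2)
  | Sum.inr w => Sum.inr (Sum.inr (c, w))

/-- The embedding of the base copy of `P(u,v,5)` into `T(u,v,k,ℓ+1)`. -/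
def embedP (k ℓ : ℕ) : (Fin 2 ⊕ Fin 5) → TVert k (ℓ + 1)
  | Sum.inl x => Sum.inl x
  | Sum.inr y => Sum.inr (Sum.inl y)

/-- The graph `T(u,v,k,ℓ)`, defined recursively: `T(u,v,k,0) = P(u,v,2^k)`, and
`T(u,v,k,ℓ+1)` is obtained from `P(u,v,5)` by gluing three copies of
`T(·,·,k,ℓ)` onto the pairs `(v₁,v₃)`, `(v₂,v₄)`, `(v₃,v₅)`. -/
def TGraph (k : ℕ) : (ℓ : ℕ) → SimpleGraph (TVert k ℓ)
  | 0 => Pgraph (2 ^ k)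
  | ℓ + 1 => SimpleGraph.fromRel (fun a b =>
      (∃ x y, (Pgraph 5).Adj x y ∧ a = embedP k ℓ x ∧ b = embedP k ℓ y) ∨
      (∃ c x y, (TGraph k ℓ).Adj x y ∧ a = embedT k ℓ c x ∧ b = embedT k ℓ c y))

@[simp] lemma PAdj_ll {b : ℕ} (x y : Fin 2) : PAdj b (Sum.inl x) (Sum.inl y) ↔ False := Iff.rfl
@[simp] lemma PAdj_rl {b : ℕ} (i : Fin b) (x : Fin 2) : PAdj b (Sum.inr i) (Sum.inl x) ↔ False := Iff.rfl
@[simp] lemma PAdj_lr {b : ℕ} (x : Fin 2) (i : Fin b) :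
    PAdj b (Sum.inl x) (Sum.inr i) ↔ (x : ℕ) = (i : ℕ) % 2 := Iff.rfl
@[simp] lemma PAdj_rr {b : ℕ} (i j : Fin b) :
    PAdj b (Sum.inr i) (Sum.inr j) ↔ (j : ℕ) = (i : ℕ) + 1 := Iff.rfl

instance (b : ℕ) : DecidableRel (PAdj b) := fun x y => by
  cases x <;> cases y <;> simp only [PAdj_ll, PAdj_rl, PAdj_lr, PAdj_rr] <;> infer_instance

instance (b : ℕ) : DecidableRel (Pgraph b).Adj := fun x y =>
  decidable_of_iff _ (SimpleGraph.fromRel_adj (PAdj b) x y).symm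

lemma Padj_iff {b : ℕ} (x y : Fin 2 ⊕ Fin b) :
    (Pgraph b).Adj x y ↔ x ≠ y ∧ (PAdj b x y ∨ PAdj b y x) :=
  SimpleGraph.fromRel_adj (PAdj b) x y

lemma PnoTri (b : ℕ) : ∀ x y z : Fin 2 ⊕ Fin b,
    (Pgraph b).Adj x y → (Pgraph b).Adj x z → (Pgraph b).Adj y z → False := by
  intro x y z hxy hxz hyz
  rw [Padj_iff] at hxy hxz hyz
  have h1 := hxy.2; have h2 := hxz.2; have h3 := hyz.2
  clear hxy hxz hyz
  rcases x with x | i <;> rcases y with y | j <;> rcases z with z | m <;>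
    simp only [PAdj_ll, PAdj_rl, PAdj_lr, PAdj_rr, or_self, or_false, false_or] at h1 h2 h3 <;>
    first | exact h1 | exact h2 | exact h3 | omega

lemma PnoUV (b : ℕ) (x y : Fin 2) : ¬ (Pgraph b).Adj (Sum.inl x) (Sum.inl y) := by
  rw [Padj_iff]; simp

instance fintypeTInner (k : ℕ) : ∀ ℓ, Fintype (TInner k ℓ)
  | 0 => inferInstanceAs (Fintype (Fin (2 ^ k)))
  | ℓ + 1 => letI := fintypeTInner k ℓ; inferInstanceAs (Fintype (Fin 5 ⊕ (Fin 3 × TInner k ℓ)))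

instance decEqTInner (k : ℕ) : ∀ ℓ, DecidableEq (TInner k ℓ)
  | 0 => inferInstanceAs (DecidableEq (Fin (2 ^ k)))
  | ℓ + 1 => letI := decEqTInner k ℓ; inferInstanceAs (DecidableEq (Fin 5 ⊕ (Fin 3 × TInner k ℓ)))

lemma TGraph_zero (k : ℕ) : TGraph k 0 = Pgraph (2 ^ k) := rfl

lemma TGraph_succ_adj (k ℓ : ℕ) (a b : TVert k (ℓ + 1)) :
    (TGraph k (ℓ + 1)).Adj a b ↔ a ≠ b ∧
      (((∃ x y, (Pgraph 5).Adj x y ∧ a = embedP k ℓ x ∧ b = embedP k ℓ y) ∨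
        (∃ c x y, (TGraph k ℓ).Adj x y ∧ a = embedT k ℓ c x ∧ b = embedT k ℓ c y)) ∨
       ((∃ x y, (Pgraph 5).Adj x y ∧ b = embedP k ℓ x ∧ a = embedP k ℓ y) ∨
        (∃ c x y, (TGraph k ℓ).Adj x y ∧ b = embedT k ℓ c x ∧ a = embedT k ℓ c y))) := by
  exact SimpleGraph.fromRel_adj _ a b

lemma adj_succ_cases {k ℓ : ℕ} {a b : TVert k (ℓ + 1)} (h : (TGraph k (ℓ + 1)).Adj a b) :
    (∃ x y, (Pgraph 5).Adj x y ∧ a = embedP k ℓ x ∧ b = embedP k ℓ y) ∨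
    (∃ c x y, (TGraph k ℓ).Adj x y ∧ a = embedT k ℓ c x ∧ b = embedT k ℓ c y) := by
  rw [TGraph_succ_adj] at h
  rcases h.2 with (h' | h') | (h' | h')
  · exact Or.inl h'
  · exact Or.inr h'
  · obtain ⟨x, y, hxy, hb, ha⟩ := h'
    exact Or.inl ⟨y, x, hxy.symm, ha, hb⟩
  · obtain ⟨c, x, y, hxy, hb, ha⟩ := h'
    exact Or.inr ⟨c, y, x, hxy.symm, ha, hb⟩

lemma embedP_inj (k ℓ : ℕ) : Function.Injective (embedP k ℓ) := by
  intro x y h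
  cases x <;> cases y <;> simp only [embedP] at h <;>
    first
      | (injection h with h2; rw [h2])
      | (injection h with h2; injection h2 with h3; rw [h3])
      | (exfalso; injection h)
      | (injection h with h2; injection h2)

lemma embedT_ne_inl (k ℓ : ℕ) (c : Fin 3) (v : TVert k ℓ) (z : Fin 2) :
    embedT k ℓ c v ≠ Sum.inl z := by
  cases v with
  | inl x => by_cases hx : x = 0 <;> simp [embedT, hx]
  | inr w => simp [embedT]

lemma gluePair_ne (c : Fin 3) : (gluePair c).1 ≠ (gluePair c).2 := by
  simp only [gluePair, ne_eq, Fin.mk.injEq]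
  omega

lemma fin2_eq_one {z : Fin 2} (h : z ≠ 0) : z = 1 := by omega

lemma embedT_inj (k ℓ : ℕ) (c : Fin 3) : Function.Injective (embedT k ℓ c) := by
  intro x y h
  have hgp := gluePair_ne c
  cases x with
  | inl x => cases y with
    | inl y =>
      simp only [embedT] at h
      by_cases hx : x = 0 <;> by_cases hy : y = 0
      · rw [hx, hy]
      · rw [if_pos hx, if_neg hy] at h
        injection h with h2; injection h2 with h3; exact absurd h3 hgp
      · rw [if_neg hx, if_pos hy] at h
        injection h with h2; injection h2 with h3; exact absurd h3.symm hgp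
      · rw [fin2_eq_one hx, fin2_eq_one hy]
    | inr w =>
      exfalso
      simp only [embedT] at h
      by_cases hx : x = 0 <;> [rw [if_pos hx] at h; rw [if_neg hx] at h] <;>
        (injection h with h2; injection h2)
  | inr w => cases y with
    | inl y =>
      exfalso
      simp only [embedT] at h
      by_cases hy : y = 0 <;> [rw [if_pos hy] at h; rw [if_neg hy] at h] <;>
        (injection h with h2; injection h2)
    | inr w' =>
      simp only [embedT] at h
      injection h with h2
      injection h2 with h3
      injection h3 with h4 h5
      rw [h5]

lemma TnoUV (k : ℕ) : ∀ ℓ (x y : Fin 2), ¬ (TGraph k ℓ).Adj (Sum.inl x) (Sum.inl y)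
  | 0, x, y => PnoUV (2 ^ k) x y
  | ℓ + 1, x, y => by
    intro h
    rcases adj_succ_cases h with ⟨x', y', hxy, ha, hb⟩ | ⟨c, x', y', hxy, ha, hb⟩
    · cases x' with
      | inl s => cases y' with
        | inl t => exact PnoUV 5 s t hxy
        | inr t => simp [embedP] at hb
      | inr s => simp [embedP] at ha
    · exact embedT_ne_inl k ℓ c x' x ha.symm

lemma edge_both_base {k ℓ : ℕ} {x y : Fin 2 ⊕ Fin 5}
    (h : (TGraph k (ℓ + 1)).Adj (embedP k ℓ x) (embedP k ℓ y)) : (Pgraph 5).Adj x y := by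
  rcases adj_succ_cases h with ⟨x', y', hxy, ha, hb⟩ | ⟨c, x', y', hxy, ha, hb⟩
  · cases embedP_inj k ℓ ha; cases embedP_inj k ℓ hb; exact hxy
  · exfalso
    cases x' with
    | inr w => cases x <;> simp [embedP, embedT] at ha <;> (injection ha with h2; injection h2)
    | inl s =>
      cases y' with
      | inr w => cases y <;> simp [embedP, embedT] at hb <;> (injection hb with h2; injection h2)
      | inl t => exact TnoUV k ℓ s t hxy

lemma edge_with_inner {k ℓ : ℕ} {c : Fin 3} {w : TInner k ℓ} {b : TVert k (ℓ + 1)}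
    (h : (TGraph k (ℓ + 1)).Adj (Sum.inr (Sum.inr (c, w))) b) :
    ∃ y', (TGraph k ℓ).Adj (Sum.inr w) y' ∧ b = embedT k ℓ c y' := by
  rcases adj_succ_cases h with ⟨x', y', hxy, ha, hb⟩ | ⟨c', x', y', hxy, ha, hb⟩
  · exfalso
    cases x' <;> simp [embedP] at ha <;> (injection ha with h2; injection h2)
  · cases x' with
    | inl s =>
      exfalso
      simp only [embedT] at ha
      by_cases hs : s = 0 <;> [rw [if_pos hs] at ha; rw [if_neg hs] at ha] <;>
        (injection ha with h2; injection h2)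
    | inr w' =>
      simp only [embedT] at ha
      injection ha with h2; injection h2 with h3; injection h3 with h4 h5
      subst h4; subst h5
      exact ⟨y', hxy, hb⟩

lemma glue_not_adj (c : Fin 3) :
    ¬ (Pgraph 5).Adj (Sum.inr (gluePair c).1) (Sum.inr (gluePair c).2) := by
  fin_cases c <;> decide

lemma embedT_inl (k ℓ : ℕ) (c : Fin 3) (s : Fin 2) :
    embedT k ℓ c (Sum.inl s) =
      embedP k ℓ (Sum.inr (if s = 0 then (gluePair c).1 else (gluePair c).2)) := by
  by_cases hs : s = 0 <;> simp [embedT, embedP, hs]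

lemma fin2_cases {s1 s2 : Fin 2} (h : s1 ≠ s2) (h1 : s1 ≠ 0) : s1 = 1 ∧ s2 = 0 := by
  revert h h1; revert s1 s2; decide

lemma TnoTri (k : ℕ) : ∀ ℓ, ∀ x y z : TVert k ℓ,
    (TGraph k ℓ).Adj x y → (TGraph k ℓ).Adj x z → (TGraph k ℓ).Adj y z → False
  | 0, x, y, z => PnoTri (2 ^ k) x y z
  | ℓ + 1, x, y, z => by
    intro hxy hxz hyz
    have inner_case : ∀ (c : Fin 3) (w : TInner k ℓ) (b1 b2 : TVert k (ℓ + 1)),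
        (TGraph k (ℓ + 1)).Adj (Sum.inr (Sum.inr (c, w))) b1 →
        (TGraph k (ℓ + 1)).Adj (Sum.inr (Sum.inr (c, w))) b2 →
        (TGraph k (ℓ + 1)).Adj b1 b2 → False := by
      intro c w b1 b2 h1 h2 h12
      obtain ⟨y1, hy1, rfl⟩ := edge_with_inner h1
      obtain ⟨y2, hy2, rfl⟩ := edge_with_inner h2
      cases y1 with
      | inr w1 =>
        obtain ⟨y2', hy2', he⟩ := edge_with_inner (show (TGraph k (ℓ+1)).Adj _ _ from h12)
        rw [← embedT_inj k ℓ c he] at hy2'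
        exact TnoTri k ℓ _ _ _ hy1 hy2 hy2'
      | inl s1 =>
        cases y2 with
        | inr w2 =>
          obtain ⟨y1', hy1', he⟩ := edge_with_inner (show (TGraph k (ℓ+1)).Adj _ _ from h12.symm)
          rw [← embedT_inj k ℓ c he] at hy1'
          exact TnoTri k ℓ _ _ _ hy2 hy1 hy1'
        | inl s2 =>
          have hne : s1 ≠ s2 := by
            intro he; exact h12.ne (by rw [he])
          rw [embedT_inl, embedT_inl] at h12
          have hP := edge_both_base h12
          by_cases hs1 : s1 = 0
          · have hs2 : ¬ s2 = 0 := fun h => hne (by rw [hs1, h])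
            rw [if_pos hs1, if_neg hs2] at hP
            exact glue_not_adj c hP
          · obtain ⟨he1, he2⟩ := fin2_cases hne hs1
            rw [if_neg hs1, if_pos he2] at hP
            exact glue_not_adj c hP.symm
    rcases x with sx | ix
    · rcases y with sy | iy
      · exact TnoUV k (ℓ+1) sx sy hxy
      · cases iy with
        | inr p => exact inner_case p.1 p.2 _ _ hxy.symm hyz hxz
        | inl i =>
          rcases z with sz | iz
          · exact TnoUV k (ℓ+1) sx sz hxz
          · cases iz with
            | inr p => exact inner_case p.1 p.2 _ _ hxz.symm hyz.symm hxy
            | inl j =>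
              exact PnoTri 5 (Sum.inl sx) (Sum.inr i) (Sum.inr j)
                (edge_both_base (x := Sum.inl sx) (y := Sum.inr i) hxy)
                (edge_both_base (x := Sum.inl sx) (y := Sum.inr j) hxz)
                (edge_both_base (x := Sum.inr i) (y := Sum.inr j) hyz)
    · cases ix with
      | inr p => exact inner_case p.1 p.2 _ _ hxy hxz hyz
      | inl i =>
        rcases y with sy | iy
        · rcases z with sz | iz
          · exact TnoUV k (ℓ+1) sy sz hyz
          · cases iz with
            | inr p => exact inner_case p.1 p.2 _ _ hxz.symm hyz.symm hxy
            | inl j =>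
              exact PnoTri 5 (Sum.inr i) (Sum.inl sy) (Sum.inr j)
                (edge_both_base (x := Sum.inr i) (y := Sum.inl sy) hxy)
                (edge_both_base (x := Sum.inr i) (y := Sum.inr j) hxz)
                (edge_both_base (x := Sum.inl sy) (y := Sum.inr j) hyz)
        · cases iy with
          | inr p => exact inner_case p.1 p.2 _ _ hxy.symm hyz hxz
          | inl j =>
            rcases z with sz | iz
            · exact PnoTri 5 (Sum.inr i) (Sum.inr j) (Sum.inl sz)
                (edge_both_base (x := Sum.inr i) (y := Sum.inr j) hxy)
                (edge_both_base (x := Sum.inr i) (y := Sum.inl sz) hxz)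
                (edge_both_base (x := Sum.inr j) (y := Sum.inl sz) hyz)
            · cases iz with
              | inr p => exact inner_case p.1 p.2 _ _ hxz.symm hyz.symm hxy
              | inl m =>
                exact PnoTri 5 (Sum.inr i) (Sum.inr j) (Sum.inr m)
                  (edge_both_base (x := Sum.inr i) (y := Sum.inr j) hxy)
                  (edge_both_base (x := Sum.inr i) (y := Sum.inr m) hxz)
                  (edge_both_base (x := Sum.inr j) (y := Sum.inr m) hyz)

lemma adj_embedP {k ℓ : ℕ} {x y : Fin 2 ⊕ Fin 5} (h : (Pgraph 5).Adj x y) :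
    (TGraph k (ℓ + 1)).Adj (embedP k ℓ x) (embedP k ℓ y) := by
  rw [TGraph_succ_adj]
  exact ⟨fun he => h.ne (embedP_inj k ℓ he), Or.inl (Or.inl ⟨x, y, h, rfl, rfl⟩)⟩

lemma adj_embedT {k ℓ : ℕ} {c : Fin 3} {x y : TVert k ℓ} (h : (TGraph k ℓ).Adj x y) :
    (TGraph k (ℓ + 1)).Adj (embedT k ℓ c x) (embedT k ℓ c y) := by
  rw [TGraph_succ_adj]
  exact ⟨fun he => h.ne (embedT_inj k ℓ c he), Or.inl (Or.inr ⟨c, x, y, h, rfl, rfl⟩)⟩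

/-- conditions satisfied by the restriction of a proper coloring to the five path
vertices of the base `P(u,v,5)`, where `a, b` are the colors of `u, v`. -/
def FrameCond (a b : Fin 3) (g : Fin 5 → Fin 3) : Prop :=
  g 0 ≠ g 1 ∧ g 1 ≠ g 2 ∧ g 2 ≠ g 3 ∧ g 3 ≠ g 4 ∧
  g 0 ≠ a ∧ g 2 ≠ a ∧ g 4 ≠ a ∧ g 1 ≠ b ∧ g 3 ≠ b

instance (a b : Fin 3) : DecidablePred (FrameCond a b) := fun g =>
  inferInstanceAs (Decidable (_ ∧ _))

def Frame (a b : Fin 3) : Type := {g : Fin 5 → Fin 3 // FrameCond a b g}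

instance (a b : Fin 3) : Fintype (Frame a b) :=
  inferInstanceAs (Fintype {g : Fin 5 → Fin 3 // FrameCond a b g})

def TupCond (a b : Fin 3) (t : Fin 3 × Fin 3 × Fin 3 × Fin 3 × Fin 3) : Prop :=
  t.1 ≠ t.2.1 ∧ t.2.1 ≠ t.2.2.1 ∧ t.2.2.1 ≠ t.2.2.2.1 ∧ t.2.2.2.1 ≠ t.2.2.2.2 ∧
  t.1 ≠ a ∧ t.2.2.1 ≠ a ∧ t.2.2.2.2 ≠ a ∧ t.2.1 ≠ b ∧ t.2.2.2.1 ≠ b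

instance (a b : Fin 3) : DecidablePred (TupCond a b) := fun t =>
  inferInstanceAs (Decidable (_ ∧ _))

lemma frame_card_le (a b : Fin 3) : Fintype.card (Frame a b) ≤ 16 := by
  have key : ∀ a b : Fin 3, Fintype.card {t // TupCond a b t} ≤ 16 := by decide
  have : Function.Injective (fun g : Frame a b =>
      (⟨(g.1 0, g.1 1, g.1 2, g.1 3, g.1 4), g.2⟩ : {t // TupCond a b t})) := by
    intro g g' h
    replace h := congrArg Subtype.val h
    simp only [Subtype.mk.injEq, Prod.mk.injEq] at h
    apply Subtype.ext; funext i
    fin_cases i <;> simp [h.1, h.2.1, h.2.2.1, h.2.2.2.1, h.2.2.2.2]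
  exact le_trans (Fintype.card_le_of_injective _ this) (key a b)

lemma frame_card_le_eq (a : Fin 3) : Fintype.card (Frame a a) ≤ 2 := by
  have key : ∀ a : Fin 3, Fintype.card {t // TupCond a a t} ≤ 2 := by decide
  have : Function.Injective (fun g : Frame a a =>
      (⟨(g.1 0, g.1 1, g.1 2, g.1 3, g.1 4), g.2⟩ : {t // TupCond a a t})) := by
    intro g g' h
    replace h := congrArg Subtype.val h
    simp only [Subtype.mk.injEq, Prod.mk.injEq] at h
    apply Subtype.ext; funext i
    fin_cases i <;> simp [h.1, h.2.1, h.2.2.1, h.2.2.2.1, h.2.2.2.2]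
  exact le_trans (Fintype.card_le_of_injective _ this) (key a)

lemma frame_exists_eq {a b : Fin 3} {g : Fin 5 → Fin 3} (h : FrameCond a b g) :
    g 0 = g 2 ∨ g 1 = g 3 ∨ g 2 = g 4 := by
  obtain ⟨h1, h2, h3, h4, h5, h6, h7, h8, h9⟩ := h
  revert h1 h2 h3 h4 h5 h6 h7 h8 h9
  generalize g 0 = x0; generalize g 1 = x1; generalize g 2 = x2
  generalize g 3 = x3; generalize g 4 = x4
  revert a b x0 x1 x2 x3 x4; decide

lemma frame_all_eq {a : Fin 3} {g : Fin 5 → Fin 3} (h : FrameCond a a g) :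
    g 0 = g 2 ∧ g 1 = g 3 ∧ g 2 = g 4 := by
  obtain ⟨h1, h2, h3, h4, h5, h6, h7, h8, h9⟩ := h
  revert h1 h2 h3 h4 h5 h6 h7 h8 h9
  generalize g 0 = x0; generalize g 1 = x1; generalize g 2 = x2
  generalize g 3 = x3; generalize g 4 = x4
  revert a x0 x1 x2 x3 x4; decide

def ColSub (k ℓ : ℕ) (a b : Fin 3) : Type :=
  {ψ : TVert k ℓ → Fin 3 // ψ ∈ properColorings (TGraph k ℓ) ∧
    ψ (Sum.inl 0) = a ∧ ψ (Sum.inl 1) = b}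

instance (k ℓ : ℕ) (a b : Fin 3) : Finite (ColSub k ℓ a b) := by
  unfold ColSub; infer_instance

noncomputable def NColor (k ℓ : ℕ) (a b : Fin 3) : ℕ := Nat.card (ColSub k ℓ a b)

def keyTarget (k ℓ : ℕ) (a b : Fin 3) : Type :=
  Σ g : Frame a b, ∀ c : Fin 3, ColSub k ℓ (g.1 (gluePair c).1) (g.1 (gluePair c).2)

instance (k ℓ : ℕ) (a b : Fin 3) : Finite (keyTarget k ℓ a b) := by
  unfold keyTarget; infer_instance

def keyMap (k ℓ : ℕ) (a b : Fin 3) : ColSub k (ℓ + 1) a b → keyTarget k ℓ a b := fun ψ =>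
  ⟨⟨fun i => ψ.1 (Sum.inr (Sum.inl i)), by
      obtain ⟨hp, hu, hv⟩ := ψ.2
      refine ⟨?_, ?_, ?_, ?_, ?_, ?_, ?_, ?_, ?_⟩
      · exact hp _ _ (adj_embedP (x := Sum.inr 0) (y := Sum.inr 1) (by decide))
      · exact hp _ _ (adj_embedP (x := Sum.inr 1) (y := Sum.inr 2) (by decide))
      · exact hp _ _ (adj_embedP (x := Sum.inr 2) (y := Sum.inr 3) (by decide))
      · exact hp _ _ (adj_embedP (x := Sum.inr 3) (y := Sum.inr 4) (by decide))
      · intro he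
        exact hp _ _ (adj_embedP (x := Sum.inr 0) (y := Sum.inl 0) (by decide))
          (show (ψ.1 (Sum.inr (Sum.inl 0)) : Fin 3) = ψ.1 (Sum.inl 0) by rw [hu]; exact he)
      · intro he
        exact hp _ _ (adj_embedP (x := Sum.inr 2) (y := Sum.inl 0) (by decide))
          (show (ψ.1 (Sum.inr (Sum.inl 2)) : Fin 3) = ψ.1 (Sum.inl 0) by rw [hu]; exact he)
      · intro he
        exact hp _ _ (adj_embedP (x := Sum.inr 4) (y := Sum.inl 0) (by decide))
          (show (ψ.1 (Sum.inr (Sum.inl 4)) : Fin 3) = ψ.1 (Sum.inl 0) by rw [hu]; exact he)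
      · intro he
        exact hp _ _ (adj_embedP (x := Sum.inr 1) (y := Sum.inl 1) (by decide))
          (show (ψ.1 (Sum.inr (Sum.inl 1)) : Fin 3) = ψ.1 (Sum.inl 1) by rw [hv]; exact he)
      · intro he
        exact hp _ _ (adj_embedP (x := Sum.inr 3) (y := Sum.inl 1) (by decide))
          (show (ψ.1 (Sum.inr (Sum.inl 3)) : Fin 3) = ψ.1 (Sum.inl 1) by rw [hv]; exact he)⟩,
   fun c => ⟨fun v => ψ.1 (embedT k ℓ c v), by
      constructor
      · intro x y hxy
        exact ψ.2.1 _ _ (adj_embedT hxy)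
      constructor
      · exact congrArg ψ.1 (by simp [embedT])
      · exact congrArg ψ.1 (by
          show embedT k ℓ c (Sum.inl 1) = Sum.inr (Sum.inl (gluePair c).2)
          simp [embedT]; rfl)⟩⟩

lemma keyMap_inj (k ℓ : ℕ) (a b : Fin 3) : Function.Injective (keyMap k ℓ a b) := by
  intro ψ ψ' h
  have h1 : ∀ i : Fin 5, ψ.1 (Sum.inr (Sum.inl i)) = ψ'.1 (Sum.inr (Sum.inl i)) := by
    intro i
    have := congrArg (fun s : keyTarget k ℓ a b => s.1.1 i) h
    exact this
  have h2 : ∀ (c : Fin 3) (v : TVert k ℓ),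
      ψ.1 (embedT k ℓ c v) = ψ'.1 (embedT k ℓ c v) := by
    intro c v
    have := congrArg (fun s : keyTarget k ℓ a b => (s.2 c).1 v) h
    exact this
  apply Subtype.ext; funext v
  rcases v with x | iv
  · by_cases hx : x = 0
    · rw [hx, ψ.2.2.1, ψ'.2.2.1]
    · rw [fin2_eq_one hx, ψ.2.2.2, ψ'.2.2.2]
  · cases iv with
    | inl i => exact h1 i
    | inr p => exact h2 p.1 (Sum.inr p.2)

lemma nat_card_sigma {ι : Type*} [Fintype ι] {A : ι → Type*} [∀ i, Finite (A i)] :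
    Nat.card (Σ i, A i) = ∑ i, Nat.card (A i) := by
  letI : ∀ i, Fintype (A i) := fun i => Fintype.ofFinite _
  rw [Nat.card_eq_fintype_card, Fintype.card_sigma]
  exact Finset.sum_congr rfl fun i _ => (Nat.card_eq_fintype_card).symm

lemma ncolor_succ_le (k ℓ : ℕ) (a b : Fin 3) :
    NColor k (ℓ + 1) a b ≤
      ∑ g : Frame a b, ∏ c : Fin 3, NColor k ℓ (g.1 (gluePair c).1) (g.1 (gluePair c).2) := by
  have h1 : NColor k (ℓ + 1) a b ≤ Nat.card (keyTarget k ℓ a b) :=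
    Nat.card_le_card_of_injective _ (keyMap_inj k ℓ a b)
  rw [show Nat.card (keyTarget k ℓ a b) =
      ∑ g : Frame a b, ∏ c : Fin 3, NColor k ℓ (g.1 (gluePair c).1) (g.1 (gluePair c).2) from ?_] at h1
  · exact h1
  · rw [show keyTarget k ℓ a b =
        Σ g : Frame a b, ∀ c : Fin 3, ColSub k ℓ (g.1 (gluePair c).1) (g.1 (gluePair c).2) from rfl,
      nat_card_sigma]
    exact Finset.sum_congr rfl fun g _ => Nat.card_pi

lemma Padj_special {b : ℕ} (x : Fin 2) (i : Fin b) (h : (x : ℕ) = (i : ℕ) % 2) :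
    (Pgraph b).Adj (Sum.inl x) (Sum.inr i) := by
  rw [Padj_iff]; exact ⟨by simp, Or.inl h⟩

lemma Padj_consec {b : ℕ} (i j : Fin b) (h : (j : ℕ) = (i : ℕ) + 1) :
    (Pgraph b).Adj (Sum.inr i) (Sum.inr j) := by
  rw [Padj_iff]
  refine ⟨?_, Or.inl h⟩
  intro he
  injection he with he2
  rw [he2] at h; omega

lemma uniq3 : ∀ z p q q' : Fin 3, p ≠ z ∧ q ≠ z ∧ q' ≠ z ∧ q ≠ p ∧ q' ≠ p → q = q' := by decide

lemma card_ne_fin3 (z : Fin 3) : Nat.card {c : Fin 3 // c ≠ z} = 2 := by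
  rw [Nat.card_eq_fintype_card]; revert z; decide

lemma ncolor_zero_le (k : ℕ) (a b : Fin 3) : NColor k 0 a b ≤ 2 ^ (2 ^ k) := by
  classical
  have hinj : Function.Injective (fun ψ : ColSub k 0 a b =>
      (fun i : Fin (2 ^ k) => (⟨ψ.1 (Sum.inr i), by
        obtain ⟨hp, hu, hv⟩ := ψ.2
        by_cases h2 : (i : ℕ) % 2 = 0
        · rw [if_pos h2]
          intro he
          exact hp _ _ (Padj_special 0 i (by simp [h2])) (hu.trans he.symm)
        · rw [if_neg h2]
          intro he
          exact hp _ _ (Padj_special 1 i (by simp; omega)) (hv.trans he.symm)⟩ :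
        {c : Fin 3 // c ≠ (if (i : ℕ) % 2 = 0 then a else b)}))) := by
    intro ψ ψ' h
    apply Subtype.ext; funext v
    rcases v with x | i
    · by_cases hx : x = 0
      · rw [hx, ψ.2.2.1, ψ'.2.2.1]
      · rw [fin2_eq_one hx, ψ.2.2.2, ψ'.2.2.2]
    · have hi := congrArg (fun f : (∀ i : Fin (2 ^ k),
          {c : Fin 3 // c ≠ (if (i : ℕ) % 2 = 0 then a else b)}) =>
          (f (show Fin (2 ^ k) from i)).1) h
      exact hi
  have := Nat.card_le_card_of_injective _ hinj
  calc NColor k 0 a b ≤ Nat.card (∀ i : Fin (2 ^ k),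
        {c : Fin 3 // c ≠ (if (i : ℕ) % 2 = 0 then a else b)}) := this
    _ = 2 ^ (2 ^ k) := by
        rw [Nat.card_pi]
        rw [Finset.prod_congr rfl (fun i _ => card_ne_fin3 _)]
        simp

lemma ncolor_zero_eq_le (k : ℕ) (a : Fin 3) : NColor k 0 a a ≤ 2 := by
  classical
  have h0 : (0 : ℕ) < 2 ^ k := Nat.pow_pos (by norm_num)
  -- every path vertex avoids a
  have hne : ∀ (ψ : ColSub k 0 a a) (j : Fin (2 ^ k)), ψ.1 (Sum.inr j) ≠ a := by
    intro ψ j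
    obtain ⟨hp, hu, hv⟩ := ψ.2
    by_cases h2 : (j : ℕ) % 2 = 0
    · intro he; exact hp _ _ (Padj_special 0 j (by simp [h2])) (hu.trans he.symm)
    · intro he; exact hp _ _ (Padj_special 1 j (by simp; omega)) (hv.trans he.symm)
  have hinj : Function.Injective (fun ψ : ColSub k 0 a a =>
      (⟨ψ.1 (Sum.inr ⟨0, h0⟩), hne ψ _⟩ : {c : Fin 3 // c ≠ a})) := by
    intro ψ ψ' h
    simp only [Subtype.mk.injEq] at h
    have key : ∀ n (hn : n < 2 ^ k), ψ.1 (Sum.inr ⟨n, hn⟩) = ψ'.1 (Sum.inr ⟨n, hn⟩) := by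
      intro n
      induction n with
      | zero => intro hn; exact h
      | succ m ih =>
        intro hn
        have hm : m < 2 ^ k := by omega
        have hadj : (Pgraph (2 ^ k)).Adj (Sum.inr ⟨m, hm⟩) (Sum.inr ⟨m + 1, hn⟩) :=
          Padj_consec _ _ rfl
        exact uniq3 a (ψ.1 (Sum.inr ⟨m, hm⟩)) _ _
          ⟨hne ψ _, hne ψ _, hne ψ' _,
           fun he => ψ.2.1 _ _ hadj he.symm,
           fun he => ψ'.2.1 _ _ hadj (he.trans (ih hm)).symm⟩
    apply Subtype.ext; funext v
    rcases v with x | j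
    · by_cases hx : x = 0
      · rw [hx, ψ.2.2.1, ψ'.2.2.1]
      · rw [fin2_eq_one hx, ψ.2.2.2, ψ'.2.2.2]
    · exact key (show Fin (2 ^ k) from j).1 (show Fin (2 ^ k) from j).2
  calc NColor k 0 a a ≤ Nat.card {c : Fin 3 // c ≠ a} :=
        Nat.card_le_card_of_injective _ hinj
    _ = 2 := card_ne_fin3 a

noncomputable def Xb : ℕ → ℝ
  | 0 => 1
  | ℓ + 1 => 1 + 3 * Xb ℓ

noncomputable def Yb (k : ℕ) : ℕ → ℝ
  | 0 => (2 : ℝ) ^ k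
  | ℓ + 1 => 4 + Xb ℓ + 2 * Yb k ℓ

lemma Xb_nonneg : ∀ ℓ, 0 ≤ Xb ℓ
  | 0 => by norm_num [Xb]
  | ℓ + 1 => by have := Xb_nonneg ℓ; simp only [Xb]; linarith

lemma Xb_le_Yb (k : ℕ) : ∀ ℓ, Xb ℓ ≤ Yb k ℓ
  | 0 => by
    simp only [Xb, Yb]
    exact one_le_pow₀ (by norm_num)
  | ℓ + 1 => by
    have h := Xb_le_Yb k ℓ
    have h0 := Xb_nonneg ℓ
    simp only [Xb, Yb]; linarith

lemma rpow2_add (p q : ℝ) : (2 : ℝ) ^ (p + q) = (2 : ℝ) ^ p * (2 : ℝ) ^ q :=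
  Real.rpow_add (by norm_num) p q

lemma rpow2_nonneg (p : ℝ) : (0 : ℝ) ≤ (2 : ℝ) ^ p := Real.rpow_nonneg (by norm_num) p

lemma rpow2_mono {p q : ℝ} (h : p ≤ q) : (2 : ℝ) ^ p ≤ (2 : ℝ) ^ q :=
  Real.rpow_le_rpow_of_exponent_le (by norm_num) h

lemma gluePair_zero : gluePair 0 = (0, 2) := by decide
lemma gluePair_one : gluePair 1 = (1, 3) := by decide
lemma gluePair_two : gluePair 2 = (2, 4) := by decide

lemma main_bound (k : ℕ) : ∀ ℓ (a b : Fin 3),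
    ((NColor k ℓ a b : ℝ) ≤ (2 : ℝ) ^ Yb k ℓ) ∧
    (a = b → (NColor k ℓ a b : ℝ) ≤ (2 : ℝ) ^ Xb ℓ) := by
  intro ℓ
  induction ℓ with
  | zero =>
    intro a b
    constructor
    · calc (NColor k 0 a b : ℝ) ≤ ((2 ^ 2 ^ k : ℕ) : ℝ) := by
            exact_mod_cast ncolor_zero_le k a b
        _ = (2 : ℝ) ^ Yb k 0 := by
            simp only [Yb]
            rw [show ((2 : ℝ) ^ k) = (((2 ^ k : ℕ) : ℕ) : ℝ) by push_cast; ring,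
              Real.rpow_natCast]
            push_cast; ring
    · intro hab; subst hab
      calc (NColor k 0 a a : ℝ) ≤ 2 := by exact_mod_cast ncolor_zero_eq_le k a
        _ = (2 : ℝ) ^ Xb 0 := by simp [Xb]
  | succ ℓ ih =>
    intro a b
    set E := (2 : ℝ) ^ Xb ℓ with hE
    set D := (2 : ℝ) ^ Yb k ℓ with hD
    have hE0 : 0 ≤ E := rpow2_nonneg _
    have hD0 : 0 ≤ D := rpow2_nonneg _
    have hED : E ≤ D := rpow2_mono (Xb_le_Yb k ℓ)
    have hNle : ∀ (a' b' : Fin 3), (NColor k ℓ a' b' : ℝ) ≤ D := fun a' b' => (ih a' b').1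
    have hNeq : ∀ (a' : Fin 3), (NColor k ℓ a' a' : ℝ) ≤ E := fun a' => (ih a' a').2 rfl
    have hN0 : ∀ (a' b' : Fin 3), (0 : ℝ) ≤ (NColor k ℓ a' b' : ℝ) := fun _ _ => Nat.cast_nonneg _
    have hsumR : (NColor k (ℓ + 1) a b : ℝ) ≤ ∑ g : Frame a b,
        ∏ c : Fin 3, (NColor k ℓ (g.1 (gluePair c).1) (g.1 (gluePair c).2) : ℝ) := by
      have := ncolor_succ_le k ℓ a b
      calc (NColor k (ℓ + 1) a b : ℝ)
          ≤ ((∑ g : Frame a b, ∏ c : Fin 3,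
              NColor k ℓ (g.1 (gluePair c).1) (g.1 (gluePair c).2) : ℕ) : ℝ) := by
            exact_mod_cast this
        _ = _ := by push_cast; rfl
    have hprod : ∀ g : Frame a b,
        (∏ c : Fin 3, (NColor k ℓ (g.1 (gluePair c).1) (g.1 (gluePair c).2) : ℝ))
          = (NColor k ℓ (g.1 0) (g.1 2) : ℝ) * (NColor k ℓ (g.1 1) (g.1 3) : ℝ) *
            (NColor k ℓ (g.1 2) (g.1 4) : ℝ) := by
      intro g
      rw [Fin.prod_univ_three]
      rw [gluePair_zero, gluePair_one, gluePair_two]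
    constructor
    · -- general bound
      have hterm : ∀ g : Frame a b,
          (∏ c : Fin 3, (NColor k ℓ (g.1 (gluePair c).1) (g.1 (gluePair c).2) : ℝ)) ≤
            E * D * D := by
        intro g
        rw [hprod g]
        rcases frame_exists_eq g.2 with h02 | h13 | h24
        · have h1 : (NColor k ℓ (g.1 0) (g.1 2) : ℝ) ≤ E := by rw [h02]; exact hNeq _
          have h2 := hNle (g.1 1) (g.1 3)
          have h3 := hNle (g.1 2) (g.1 4)
          gcongr
        · have h2 : (NColor k ℓ (g.1 1) (g.1 3) : ℝ) ≤ E := by rw [h13]; exact hNeq _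
          have h1 := hNle (g.1 0) (g.1 2)
          have h3 := hNle (g.1 2) (g.1 4)
          calc (NColor k ℓ (g.1 0) (g.1 2) : ℝ) * (NColor k ℓ (g.1 1) (g.1 3) : ℝ) *
              (NColor k ℓ (g.1 2) (g.1 4) : ℝ) ≤ D * E * D := by gcongr
            _ = E * D * D := by ring
        · have h3 : (NColor k ℓ (g.1 2) (g.1 4) : ℝ) ≤ E := by rw [h24]; exact hNeq _
          have h1 := hNle (g.1 0) (g.1 2)
          have h2 := hNle (g.1 1) (g.1 3)
          calc (NColor k ℓ (g.1 0) (g.1 2) : ℝ) * (NColor k ℓ (g.1 1) (g.1 3) : ℝ) *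
              (NColor k ℓ (g.1 2) (g.1 4) : ℝ) ≤ D * D * E := by gcongr
            _ = E * D * D := by ring
      have hsum2 : (∑ g : Frame a b,
          ∏ c : Fin 3, (NColor k ℓ (g.1 (gluePair c).1) (g.1 (gluePair c).2) : ℝ)) ≤
          (Fintype.card (Frame a b) : ℝ) * (E * D * D) := by
        calc _ ≤ ∑ _g : Frame a b, (E * D * D) := Finset.sum_le_sum fun g _ => hterm g
          _ = (Fintype.card (Frame a b) : ℝ) * (E * D * D) := by
              rw [Finset.sum_const, Finset.card_univ, nsmul_eq_mul]
      have hcard : (Fintype.card (Frame a b) : ℝ) ≤ 16 := by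
        exact_mod_cast frame_card_le a b
      calc (NColor k (ℓ + 1) a b : ℝ) ≤ _ := hsumR
        _ ≤ (Fintype.card (Frame a b) : ℝ) * (E * D * D) := hsum2
        _ ≤ 16 * (E * D * D) := by
            apply mul_le_mul_of_nonneg_right hcard
            positivity
        _ = (2 : ℝ) ^ Yb k (ℓ + 1) := by
            simp only [Yb]
            rw [show (4 : ℝ) + Xb ℓ + 2 * Yb k ℓ = 4 + Xb ℓ + Yb k ℓ + Yb k ℓ by ring]
            rw [rpow2_add, rpow2_add, rpow2_add]
            rw [show ((2 : ℝ) ^ (4 : ℝ)) = 16 by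
              rw [show (4 : ℝ) = ((4 : ℕ) : ℝ) by norm_num, Real.rpow_natCast]; norm_num]
            rw [hE, hD]; ring
    · -- equal-ends bound
      intro hab; subst hab
      have hterm : ∀ g : Frame a a,
          (∏ c : Fin 3, (NColor k ℓ (g.1 (gluePair c).1) (g.1 (gluePair c).2) : ℝ)) ≤
            E * E * E := by
        intro g
        rw [hprod g]
        obtain ⟨h02, h13, h24⟩ := frame_all_eq g.2
        have h1 : (NColor k ℓ (g.1 0) (g.1 2) : ℝ) ≤ E := by rw [h02]; exact hNeq _
        have h2 : (NColor k ℓ (g.1 1) (g.1 3) : ℝ) ≤ E := by rw [h13]; exact hNeq _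
        have h3 : (NColor k ℓ (g.1 2) (g.1 4) : ℝ) ≤ E := by rw [h24]; exact hNeq _
        gcongr
      have hcard : (Fintype.card (Frame a a) : ℝ) ≤ 2 := by
        exact_mod_cast frame_card_le_eq a
      calc (NColor k (ℓ + 1) a a : ℝ) ≤ _ := hsumR
        _ ≤ ∑ _g : Frame a a, (E * E * E) := Finset.sum_le_sum fun g _ => hterm g
        _ = (Fintype.card (Frame a a) : ℝ) * (E * E * E) := by
            rw [Finset.sum_const, Finset.card_univ, nsmul_eq_mul]
        _ ≤ 2 * (E * E * E) := by
            apply mul_le_mul_of_nonneg_right hcard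
            positivity
        _ = (2 : ℝ) ^ Xb (ℓ + 1) := by
            simp only [Xb]
            rw [show (1 : ℝ) + 3 * Xb ℓ = 1 + Xb ℓ + Xb ℓ + Xb ℓ by ring]
            rw [rpow2_add, rpow2_add, rpow2_add, Real.rpow_one, hE]
            ring

lemma total_le (k ℓ : ℕ) :
    Nat.card {ψ : TVert k ℓ → Fin 3 // ψ ∈ properColorings (TGraph k ℓ)} ≤
      ∑ p : Fin 3 × Fin 3, NColor k ℓ p.1 p.2 := by
  classical
  have hinj : Function.Injective
      (fun ψ : {ψ : TVert k ℓ → Fin 3 // ψ ∈ properColorings (TGraph k ℓ)} =>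
        (⟨(ψ.1 (Sum.inl 0), ψ.1 (Sum.inl 1)), ⟨ψ.1, ψ.2, rfl, rfl⟩⟩ :
          Σ p : Fin 3 × Fin 3, ColSub k ℓ p.1 p.2)) := by
    intro ψ ψ' h
    have := congrArg (fun s : (Σ p : Fin 3 × Fin 3, ColSub k ℓ p.1 p.2) =>
      (s.2.1 : TVert k ℓ → Fin 3)) h
    exact Subtype.ext this
  calc Nat.card {ψ : TVert k ℓ → Fin 3 // ψ ∈ properColorings (TGraph k ℓ)}
      ≤ Nat.card (Σ p : Fin 3 × Fin 3, ColSub k ℓ p.1 p.2) :=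
        Nat.card_le_card_of_injective _ hinj
    _ = ∑ p : Fin 3 × Fin 3, NColor k ℓ p.1 p.2 := nat_card_sigma

lemma Xb_le (ℓ : ℕ) : Xb ℓ ≤ 1.5 * 3 ^ ℓ - 0.5 := by
  induction ℓ with
  | zero => norm_num [Xb]
  | succ m ih =>
    have h3 : (3 : ℝ) ^ (m + 1) = 3 * 3 ^ m := by ring
    simp only [Xb]; rw [h3]; linarith

lemma Yb_le (k ℓ : ℕ) : Yb k ℓ ≤ 2 ^ ℓ * ((2 : ℝ) ^ k + 2) + 1.5 * 3 ^ ℓ - 3.5 := by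
  induction ℓ with
  | zero => simp only [Yb]; norm_num; linarith [pow_nonneg (by norm_num : (0:ℝ) ≤ 2) k]
  | succ m ih =>
    have h3 : (3 : ℝ) ^ (m + 1) = 3 * 3 ^ m := by ring
    have h2 : (2 : ℝ) ^ (m + 1) = 2 * 2 ^ m := by ring
    have hx := Xb_le m
    simp only [Yb]; rw [h3, h2]; linarith

lemma card_TInner_zero (k : ℕ) : Nat.card (TInner k 0) = 2 ^ k := by
  rw [show TInner k 0 = Fin (2 ^ k) from rfl]
  simp

lemma card_TInner_succ (k ℓ : ℕ) :
    Nat.card (TInner k (ℓ + 1)) = 5 + 3 * Nat.card (TInner k ℓ) := by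
  rw [show TInner k (ℓ + 1) = (Fin 5 ⊕ (Fin 3 × TInner k ℓ)) from rfl,
    Nat.card_sum, Nat.card_prod]
  simp

lemma card_TInner_ge (k : ℕ) : ∀ ℓ, 3 ^ ℓ * 2 ^ k ≤ Nat.card (TInner k ℓ)
  | 0 => by rw [card_TInner_zero]; simp
  | ℓ + 1 => by
    have ih := card_TInner_ge k ℓ
    rw [card_TInner_succ]
    calc 3 ^ (ℓ + 1) * 2 ^ k = 3 * (3 ^ ℓ * 2 ^ k) := by ring
      _ ≤ 3 * Nat.card (TInner k ℓ) := by omega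
      _ ≤ 5 + 3 * Nat.card (TInner k ℓ) := by omega

lemma card_TInner_mono (ℓ : ℕ) {k k' : ℕ} (h : k ≤ k') :
    Nat.card (TInner k ℓ) ≤ Nat.card (TInner k' ℓ) := by
  induction ℓ with
  | zero => rw [card_TInner_zero, card_TInner_zero]; exact Nat.pow_le_pow_right (by norm_num) h
  | succ m ih => rw [card_TInner_succ, card_TInner_succ]; omega

lemma card_TVert (k ℓ : ℕ) : Nat.card (TVert k ℓ) = 2 + Nat.card (TInner k ℓ) := by
  rw [show TVert k ℓ = (Fin 2 ⊕ TInner k ℓ) from rfl, Nat.card_sum]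
  simp

lemma TcliqueFree (k ℓ : ℕ) : (TGraph k ℓ).CliqueFree 3 := by
  intro s hs
  rw [SimpleGraph.is3Clique_iff] at hs
  obtain ⟨x, y, z, hxy, hxz, hyz, rfl⟩ := hs
  exact TnoTri k ℓ x y z hxy hxz hyz

lemma logb_pos32 : 0 < Real.logb 2 (3 / 2) := Real.logb_pos (by norm_num) (by norm_num)

lemma rpow2_pow (p : ℝ) (m : ℕ) : ((2 : ℝ) ^ p) ^ m = (2 : ℝ) ^ (p * m) := by
  rw [← Real.rpow_natCast ((2 : ℝ) ^ p) m, ← Real.rpow_mul (by norm_num : (0 : ℝ) ≤ 2)]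

lemma final_bound (ℓ k : ℕ) (hℓ : 1 ≤ ℓ)
    (hk : (k : ℤ) = ⌈(ℓ : ℝ) * Real.logb 2 (3 / 2)⌉) :
    (Nat.card {ψ : TVert k ℓ → Fin 3 // ψ ∈ properColorings (TGraph k ℓ)} : ℝ) ≤
      (64 : ℝ) ^ ((Nat.card (TVert k ℓ) : ℝ) ^ (Real.log 3 / Real.log (9 / 2))) := by
  set x := (ℓ : ℝ) * Real.logb 2 (3 / 2) with hxdef
  set α := Real.log 3 / Real.log (9 / 2) with hαdef
  set n := (Nat.card (TVert k ℓ) : ℝ) with hndef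
  have hkx : x ≤ (k : ℝ) := by
    have h1 := Int.le_ceil x
    rw [← hk] at h1
    exact_mod_cast h1
  have hkx2 : (k : ℝ) < x + 1 := by
    have h1 := Int.ceil_lt_add_one x
    rw [← hk] at h1
    exact_mod_cast h1
  have h2logb : (2 : ℝ) ^ Real.logb 2 (3 / 2) = 3 / 2 :=
    Real.rpow_logb (by norm_num) (by norm_num) (by norm_num)
  have hxpow : ((3 : ℝ) / 2) ^ ℓ = (2 : ℝ) ^ x := by
    rw [← h2logb, rpow2_pow, hxdef, mul_comm]
  have hA1 : ((3 : ℝ) / 2) ^ ℓ ≤ (2 : ℝ) ^ k := by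
    rw [hxpow, ← Real.rpow_natCast 2 k]
    exact rpow2_mono hkx
  have hA2 : (2 : ℝ) ^ k ≤ 2 * ((3 : ℝ) / 2) ^ ℓ := by
    rw [hxpow, ← Real.rpow_natCast 2 k]
    calc (2 : ℝ) ^ ((k : ℕ) : ℝ) ≤ (2 : ℝ) ^ (x + 1) := rpow2_mono hkx2.le
      _ = 2 * (2 : ℝ) ^ x := by rw [rpow2_add, Real.rpow_one]; ring
  have hn_ge : ((9 : ℝ) / 2) ^ ℓ ≤ n := by
    have h1 := card_TInner_ge k ℓ
    have h2 : ((3 ^ ℓ * 2 ^ k : ℕ) : ℝ) ≤ (Nat.card (TInner k ℓ) : ℝ) := by exact_mod_cast h1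
    have h3 : (3 : ℝ) ^ ℓ * ((3 : ℝ) / 2) ^ ℓ ≤ (3 : ℝ) ^ ℓ * (2 : ℝ) ^ k :=
      mul_le_mul_of_nonneg_left hA1 (pow_nonneg (by norm_num) ℓ)
    have h4 : (3 : ℝ) ^ ℓ * ((3 : ℝ) / 2) ^ ℓ = ((9 : ℝ) / 2) ^ ℓ := by
      rw [← mul_pow]; norm_num
    have h5 : n = 2 + (Nat.card (TInner k ℓ) : ℝ) := by
      rw [hndef, card_TVert]; push_cast; ring
    rw [h5]
    push_cast at h2
    linarith
  have hα0 : 0 ≤ α := div_nonneg (Real.log_nonneg (by norm_num)) (Real.log_nonneg (by norm_num))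
  have hkey : (((9 : ℝ) / 2) ^ ℓ) ^ α = (3 : ℝ) ^ ℓ := by
    rw [Real.rpow_def_of_pos (pow_pos (by norm_num) ℓ), Real.log_pow]
    have hlog92 : Real.log (9 / 2) ≠ 0 := ne_of_gt (Real.log_pos (by norm_num))
    rw [show ((ℓ : ℝ) * Real.log (9 / 2)) * α = (ℓ : ℝ) * Real.log 3 by
      rw [hαdef]; field_simp]
    rw [Real.exp_nat_mul, Real.exp_log (by norm_num)]
  have hnα : (3 : ℝ) ^ ℓ ≤ n ^ α := by
    rw [← hkey]
    exact Real.rpow_le_rpow (pow_nonneg (by norm_num) ℓ) hn_ge hα0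
  -- bound on number of colorings
  have h9 : (Nat.card {ψ : TVert k ℓ → Fin 3 // ψ ∈ properColorings (TGraph k ℓ)} : ℝ) ≤
      9 * (2 : ℝ) ^ Yb k ℓ := by
    have h1 := total_le k ℓ
    have h2 : ((∑ p : Fin 3 × Fin 3, NColor k ℓ p.1 p.2 : ℕ) : ℝ) =
        ∑ p : Fin 3 × Fin 3, (NColor k ℓ p.1 p.2 : ℝ) := by push_cast; rfl
    calc (Nat.card {ψ : TVert k ℓ → Fin 3 // ψ ∈ properColorings (TGraph k ℓ)} : ℝ)
        ≤ ((∑ p : Fin 3 × Fin 3, NColor k ℓ p.1 p.2 : ℕ) : ℝ) := by exact_mod_cast h1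
      _ = ∑ p : Fin 3 × Fin 3, (NColor k ℓ p.1 p.2 : ℝ) := h2
      _ ≤ ∑ _p : Fin 3 × Fin 3, (2 : ℝ) ^ Yb k ℓ :=
          Finset.sum_le_sum fun p _ => (main_bound k ℓ p.1 p.2).1
      _ = 9 * (2 : ℝ) ^ Yb k ℓ := by
          rw [Finset.sum_const, Finset.card_univ, nsmul_eq_mul]; norm_num
  have hexpand : (2 : ℝ) ^ ℓ * ((2 : ℝ) ^ k + 2) = 2 ^ ℓ * 2 ^ k + 2 * 2 ^ ℓ := by ring
  have h23 : (2 : ℝ) ^ ℓ ≤ (3 : ℝ) ^ ℓ := pow_le_pow_left₀ (by norm_num) (by norm_num) ℓ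
  have h13 : (1 : ℝ) ≤ (3 : ℝ) ^ ℓ := one_le_pow₀ (by norm_num)
  have h2k3 : (2 : ℝ) ^ ℓ * (2 : ℝ) ^ k ≤ 2 * (3 : ℝ) ^ ℓ := by
    calc (2 : ℝ) ^ ℓ * (2 : ℝ) ^ k ≤ (2 : ℝ) ^ ℓ * (2 * ((3 : ℝ) / 2) ^ ℓ) :=
          mul_le_mul_of_nonneg_left hA2 (pow_nonneg (by norm_num) ℓ)
      _ = 2 * ((2 : ℝ) * (3 / 2)) ^ ℓ := by rw [mul_pow]; ring
      _ = 2 * (3 : ℝ) ^ ℓ := by norm_num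
  have hexp : 4 + Yb k ℓ ≤ 6 * n ^ α := by
    have hYb := Yb_le k ℓ
    have : 4 + Yb k ℓ ≤ 6 * (3 : ℝ) ^ ℓ := by
      rw [hexpand] at hYb
      linarith
    linarith
  have h64 : (64 : ℝ) ^ (n ^ α) = (2 : ℝ) ^ (6 * n ^ α) := by
    rw [show (64 : ℝ) = (2 : ℝ) ^ (6 : ℝ) by
      rw [show (6 : ℝ) = ((6 : ℕ) : ℝ) by norm_num, Real.rpow_natCast]; norm_num]
    rw [← Real.rpow_mul (by norm_num : (0 : ℝ) ≤ 2)]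
  calc (Nat.card {ψ : TVert k ℓ → Fin 3 // ψ ∈ properColorings (TGraph k ℓ)} : ℝ)
      ≤ 9 * (2 : ℝ) ^ Yb k ℓ := h9
    _ ≤ 16 * (2 : ℝ) ^ Yb k ℓ := by
        have := rpow2_nonneg (Yb k ℓ); linarith
    _ = (2 : ℝ) ^ (4 + Yb k ℓ) := by
        rw [rpow2_add]
        rw [show ((2 : ℝ) ^ (4 : ℝ)) = 16 by
          rw [show (4 : ℝ) = ((4 : ℕ) : ℝ) by norm_num, Real.rpow_natCast]; norm_num]
    _ ≤ (2 : ℝ) ^ (6 * n ^ α) := rpow2_mono hexp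
    _ = (64 : ℝ) ^ (n ^ α) := h64.symm

noncomputable def Kfun (ℓ : ℕ) : ℕ := (⌈(ℓ : ℝ) * Real.logb 2 (3 / 2)⌉).toNat

lemma Kfun_spec (ℓ : ℕ) : ((Kfun ℓ : ℕ) : ℤ) = ⌈(ℓ : ℝ) * Real.logb 2 (3 / 2)⌉ :=
  Int.toNat_of_nonneg (Int.ceil_nonneg (mul_nonneg (Nat.cast_nonneg _) logb_pos32.le))

lemma Kfun_mono {ℓ ℓ' : ℕ} (h : ℓ ≤ ℓ') : Kfun ℓ ≤ Kfun ℓ' := by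
  apply Int.toNat_le_toNat
  apply Int.ceil_le_ceil
  exact mul_le_mul_of_nonneg_right (by exact_mod_cast h) logb_pos32.le

/-- Theorem 1: for every `ℓ ≥ 1`, with `k = ⌈ℓ · log₂(3/2)⌉`, the graph
`T(u,v,k,ℓ)` is triangle-free and its number `c_ℓ` of proper 3-colorings satisfies
`c_ℓ ≤ 64^(n_ℓ^(log 3 / log (9/2)))` where `n_ℓ` is its number of vertices.
In particular, the set of integers `n` arising as the number of vertices of such
a graph is infinite, so for infinitely many `n` there is an `n`-vertex
triangle-free graph with at most `64^(n^(log 3 / log (9/2)))` proper 3-colorings. -/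
theorem stmt15 :
    (∀ ℓ k : ℕ, 1 ≤ ℓ → (k : ℤ) = ⌈(ℓ : ℝ) * Real.logb 2 (3 / 2)⌉ →
      (TGraph k ℓ).CliqueFree 3 ∧
      (Nat.card {ψ : TVert k ℓ → Fin 3 // ψ ∈ properColorings (TGraph k ℓ)} : ℝ) ≤
        (64 : ℝ) ^ ((Nat.card (TVert k ℓ) : ℝ) ^ (Real.log 3 / Real.log (9 / 2)))) ∧
    {n : ℕ | ∃ ℓ k : ℕ, 1 ≤ ℓ ∧ (k : ℤ) = ⌈(ℓ : ℝ) * Real.logb 2 (3 / 2)⌉ ∧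
      n = Nat.card (TVert k ℓ)}.Infinite := by
  constructor
  · intro ℓ k hℓ hk
    exact ⟨TcliqueFree k ℓ, final_bound ℓ k hℓ hk⟩
  · apply Set.infinite_of_injective_forall_mem
      (f := fun m : ℕ => Nat.card (TVert (Kfun (m + 1)) (m + 1)))
    · have hsm : StrictMono (fun m : ℕ => Nat.card (TVert (Kfun (m + 1)) (m + 1))) := by
        apply strictMono_nat_of_lt_succ
        intro m
        show Nat.card (TVert (Kfun (m + 1)) (m + 1)) < Nat.card (TVert (Kfun (m + 2)) (m + 2))
        rw [card_TVert, card_TVert, card_TInner_succ (Kfun (m + 2)) (m + 1)]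
        have h1 : Nat.card (TInner (Kfun (m + 1)) (m + 1)) ≤
            Nat.card (TInner (Kfun (m + 2)) (m + 1)) :=
          card_TInner_mono (m + 1) (Kfun_mono (by omega))
        omega
      exact hsm.injective
    · intro m
      exact ⟨m + 1, Kfun (m + 1), by omega, Kfun_spec (m + 1), rfl⟩
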